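/- Let R = ℚ[q₀, q₁, q₂, …] be the polynomial algebra in countably many variables and let X : R → R be the derivation determined by X(q_i) = (i + 1)·q_{i+1} for every i ≥ 0. Let φ₁ ∈ R be a polynomial in the single variable q₀, and define φ_i = (1/(i − 1))·X(φ_{i−1}) for i ≥ 2. Then for all i ≥ 2 and all j ≥ 1, the partial derivatives satisfy ∂φ_i/∂q_j = ∂φ_{i−1}/∂q_{j−1}. (In particular, the commutator identity [∂/∂q_j, X] = j·∂/∂q_{j−1} holds, and the φ_i are the components of the invisible symmetry Υ_k(B) of the positive covering of the 3D rdDym equation.) -/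

import Mathlib

open MvPolynomial

private theorem comm_lemma (X : Derivation ℚ (MvPolynomial ℕ ℚ) (MvPolynomial ℕ ℚ))
    (hX : ∀ i : ℕ, X (MvPolynomial.X i) = ((i : ℚ) + 1) • MvPolynomial.X (i + 1))
    (j : ℕ) (p : MvPolynomial ℕ ℚ) :
    pderiv j (X p) = X (pderiv j p) + (j : ℚ) • pderiv (j - 1) p := by
  have h : ⁅(pderiv j : Derivation ℚ (MvPolynomial ℕ ℚ) (MvPolynomial ℕ ℚ)), X⁆
      = (j : ℚ) • (pderiv (j-1) : Derivation ℚ (MvPolynomial ℕ ℚ) (MvPolynomial ℕ ℚ)) := by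
    apply MvPolynomial.derivation_ext
    intro i
    simp only [Derivation.commutator_apply, hX, Derivation.smul_apply, Derivation.map_smul]
    have hz : X ((pderiv j) (MvPolynomial.X i)) = 0 := by
      rcases eq_or_ne i j with rfl | h3
      · rw [pderiv_X_self]; exact Derivation.map_one_eq_zero X
      · rw [pderiv_X_of_ne h3, map_zero]
    rw [hz, sub_zero]
    rcases eq_or_ne (j : ℕ) (i+1) with h | h
    · subst h
      rw [pderiv_X_self]
      simp only [Nat.add_sub_cancel, pderiv_X_self, smul_eq_mul, mul_one]
      push_cast; ring
    · rw [pderiv_X_of_ne h.symm]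
      rcases eq_or_ne i (j-1) with rfl | h2
      · cases j with
        | zero => simp
        | succ k => simp at h
      · rw [pderiv_X_of_ne h2]
        simp
  have h2 := congrArg (fun D => D p) h
  simp only [Derivation.commutator_apply, Derivation.smul_apply] at h2
  have h3 : pderiv j (X p) - X (pderiv j p) = (j:ℚ) • pderiv (j-1) p := h2
  linear_combination h3

/-- in the polynomial algebra `ℚ[q₀, q₁, q₂, …]`, for the
derivation `X` with `X(q_i) = (i+1)·q_{i+1}`, if `φ₁` is a polynomial in `q₀`
alone and `φ_i = (1/(i−1))·X(φ_{i−1})` for `i ≥ 2`, then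
`∂φ_i/∂q_j = ∂φ_{i−1}/∂q_{j−1}` for all `i ≥ 2`, `j ≥ 1`. -/
theorem invisible_symmetry_components
    (X : Derivation ℚ (MvPolynomial ℕ ℚ) (MvPolynomial ℕ ℚ))
    (hX : ∀ i : ℕ, X (MvPolynomial.X i) = ((i : ℚ) + 1) • MvPolynomial.X (i + 1))
    (φ : ℕ → MvPolynomial ℕ ℚ)
    (hφ1 : ∃ P : Polynomial ℚ, φ 1 = Polynomial.aeval (MvPolynomial.X 0) P)
    (hrec : ∀ i : ℕ, 2 ≤ i → φ i = (1 / ((i : ℚ) - 1)) • X (φ (i - 1))) :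
    ∀ i j : ℕ, 2 ≤ i → 1 ≤ j →
      MvPolynomial.pderiv j (φ i) = MvPolynomial.pderiv (j - 1) (φ (i - 1)) := by
  obtain ⟨P, hP⟩ := hφ1
  have hbase : ∀ j : ℕ, 1 ≤ j → pderiv j (φ 1) = 0 := by
    intro j hj
    rw [hP, Derivation.comp_aeval_eq, pderiv_X_of_ne (by omega : (0:ℕ) ≠ j), smul_zero]
  suffices H : ∀ i, 2 ≤ i → ∀ j, 1 ≤ j →
      pderiv j (φ i) = pderiv (j-1) (φ (i-1)) by
    intro i j hi hj; exact H i hi j hj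
  refine Nat.le_induction ?_ ?_
  · -- base case i = 2
    intro j hj
    have h2 : φ 2 = X (φ 1) := by
      have := hrec 2 (by norm_num)
      norm_num at this
      exact this
    rw [h2, comm_lemma X hX, hbase j hj, map_zero, zero_add]
    rcases eq_or_ne j 1 with rfl | hj1
    · norm_num
    · rw [hbase (j-1) (by omega), smul_zero]
  · -- inductive step: from i to i+1, i ≥ 2
    intro i hi IH j hj
    have hc : ((i:ℚ)) ≠ 0 := by positivity
    have hd : ((i:ℚ) - 1) ≠ 0 := by
      have : (2:ℚ) ≤ (i:ℚ) := by exact_mod_cast hi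
      linarith
    have h1 : φ (i+1) = (1/(i:ℚ)) • X (φ i) := by
      have := hrec (i+1) (by omega)
      simpa using this
    have h2 : φ i = (1/((i:ℚ)-1)) • X (φ (i-1)) := hrec i hi
    have e1 : pderiv j (φ (i+1))
        = (1/(i:ℚ)) • (X (pderiv j (φ i)) + (j:ℚ) • pderiv (j-1) (φ i)) := by
      rw [h1, Derivation.map_smul, comm_lemma X hX]
    have e2 : pderiv j (φ i) = pderiv (j-1) (φ (i-1)) := IH j hj
    simp only [Nat.add_sub_cancel]
    rcases eq_or_ne j 1 with rfl | hj1
    · -- j = 1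
      have e3 : pderiv 0 (φ i) = (1/((i:ℚ)-1)) • X (pderiv 0 (φ (i-1))) := by
        rw [h2, Derivation.map_smul, comm_lemma X hX]
        norm_num
      have e4 : X (pderiv 0 (φ (i-1))) = ((i:ℚ)-1) • pderiv 0 (φ i) := by
        rw [e3, smul_smul]
        rw [show ((i:ℚ)-1) * (1/((i:ℚ)-1)) = 1 by field_simp]
        rw [one_smul]
      rw [e1, e2]
      norm_num
      rw [e4, smul_smul, ← add_smul]
      rw [show ((i:ℚ))⁻¹ * ((i:ℚ)-1) + ((i:ℚ))⁻¹ = 1 by field_simp; ring]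
      rw [one_smul]
    · -- j ≥ 2
      obtain ⟨k, rfl⟩ : ∃ k, j = k + 2 := ⟨j - 2, by omega⟩
      have e5 : pderiv (k+1) (φ i) = pderiv k (φ (i-1)) := IH (k+1) (by omega)
      have e4 : pderiv (k+1) (φ i)
          = (1/((i:ℚ)-1)) • (X (pderiv (k+1) (φ (i-1)))
              + ((k:ℚ)+1) • pderiv k (φ (i-1))) := by
        rw [h2, Derivation.map_smul, comm_lemma X hX]
        norm_num
      have e6 : X (pderiv (k+1) (φ (i-1)))
          = (((i:ℚ)-1) - ((k:ℚ)+1)) • pderiv (k+1) (φ i) := by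
        have h0 : pderiv (k+1) (φ i)
            = (1/((i:ℚ)-1)) • (X (pderiv (k+1) (φ (i-1)))
                + ((k:ℚ)+1) • pderiv (k+1) (φ i)) := e4.trans (by rw [← e5])
        have h7 : ((i:ℚ)-1) • pderiv (k+1) (φ i)
            = X (pderiv (k+1) (φ (i-1))) + ((k:ℚ)+1) • pderiv (k+1) (φ i) := by
          conv_lhs => rw [h0]
          rw [smul_smul, mul_one_div, div_self hd, one_smul]
        have h8 := eq_sub_of_add_eq h7.symm
        rw [sub_smul]; exact h8
      rw [show (k+2)-1 = k+1 from rfl] at e1 e2 ⊢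
      rw [e1, e2, e6, ← add_smul, smul_smul]
      rw [show (1/(i:ℚ)) * ((((i:ℚ)-1) - ((k:ℚ)+1)) + (((k:ℕ)+2 : ℕ):ℚ)) = 1 by
        push_cast; field_simp; ring]
      rw [one_smul]
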